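/- (Hindsight representation of the Q-function for transition rewards; core identity in the proof of Theorem A.2.) Let r : S × A × S → ℝ be a reward function of transitions. For s ∈ S, a ∈ A define Q(s,a) := Σ_{k=0}^∞ γ^k · Σ_{u∈S} Σ_{b∈A} Σ_{u'∈S} Ja_k(s,a;u,b,u')·r(u,b,u'); this series converges absolutely. If π(s,a) > 0, then Q(s,a) = Σ_{k=0}^∞ γ^k · Σ_{u∈S} Σ_{b∈A} Σ_{u'∈S} Jπ_k(s;u,b,u') · (ĥ_k(a|s,u,b,u') / π(s,a)) · r(u,b,u'), and this series also converges absolutely. -/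

import Mathlib

open Finset

noncomputable section
open scoped Classical

/-- n-step state probabilities induced by a policy `π` and a transition kernel `p`:
`Pn 0 s s' = [s' = s]` and `Pn (n+1) s s' = ∑ a, π s a * ∑ s'', p s a s'' * Pn n s'' s'`. -/
def Pn {S A : Type*} [Fintype S] [Fintype A] (p : S → A → S → ℝ) (π : S → A → ℝ) :
    ℕ → S → S → ℝ
  | 0, s, s' => if s' = s then 1 else 0
  | n + 1, s, s' => ∑ a, π s a * ∑ s'', p s a s'' * Pn p π n s'' s'

/-- Action-conditioned n-step probabilities, defined for indices `n ≥ 1` by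
`Pa (n+1) s a s' = ∑ s'', p s a s'' * Pn n s'' s'` (the value at `n = 0` is irrelevant). -/
def Pa {S A : Type*} [Fintype S] [Fintype A] (p : S → A → S → ℝ) (π : S → A → ℝ) :
    ℕ → S → A → S → ℝ
  | 0, _, _, _ => 0
  | n + 1, s, a, s' => ∑ s'', p s a s'' * Pn p π n s'' s'

/-- Hindsight probability `h_n(a | s, s')`. -/
def hca {S A : Type*} [Fintype S] [Fintype A] (p : S → A → S → ℝ) (π : S → A → ℝ)
    (n : ℕ) (a : A) (s s' : S) : ℝ :=
  if 0 < Pn p π n s s' then π s a * Pa p π n s a s' / Pn p π n s s' else 0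

/-- n-step transition-occupancy probabilities under the policy:
`Jπ_n(s; u, b, u')`, with the Iverson-bracket convention at `n = 0`. -/
def Jpi {S A : Type*} [Fintype S] [Fintype A] (p : S → A → S → ℝ) (π : S → A → ℝ)
    (n : ℕ) (s u : S) (b : A) (u' : S) : ℝ :=
  if n = 0 then (if u = s then 1 else 0) * π s b * p s b u'
  else Pn p π n s u * π u b * p u b u'

/-- n-step transition-occupancy probabilities conditioned on the first action:
`Ja_n(s, a; u, b, u')`, with the Iverson-bracket convention at `n = 0`. -/
def Ja {S A : Type*} [Fintype S] [Fintype A] (p : S → A → S → ℝ) (π : S → A → ℝ)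
    (n : ℕ) (s : S) (a : A) (u : S) (b : A) (u' : S) : ℝ :=
  if n = 0 then (if u = s then 1 else 0) * (if b = a then 1 else 0) * p s a u'
  else Pa p π n s a u * π u b * p u b u'

/-- Transition-conditioned hindsight probability `ĥ_n(a | s, u, b, u')`. -/
def hhat {S A : Type*} [Fintype S] [Fintype A] (p : S → A → S → ℝ) (π : S → A → ℝ)
    (n : ℕ) (a : A) (s u : S) (b : A) (u' : S) : ℝ :=
  if 0 < Jpi p π n s u b u' then π s a * Ja p π n s a u b u' / Jpi p π n s u b u'
  else 0

section aux
variable {S A : Type*} [Fintype S] [Fintype A]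
variable (p : S → A → S → ℝ) (π : S → A → ℝ)

lemma Pn_nonneg (hp0 : ∀ s a s', 0 ≤ p s a s') (hπ0 : ∀ s a, 0 ≤ π s a) :
    ∀ n s s', 0 ≤ Pn p π n s s' := by
  intro n
  induction n with
  | zero => intro s s'; simp only [Pn]; split <;> norm_num
  | succ n ih =>
    intro s s'
    simp only [Pn]
    apply Finset.sum_nonneg
    intro a _
    exact mul_nonneg (hπ0 s a) (Finset.sum_nonneg fun s'' _ =>
      mul_nonneg (hp0 s a s'') (ih s'' s'))

lemma Pn_sum_one (hp1 : ∀ s a, ∑ s', p s a s' = 1) (hπ1 : ∀ s, ∑ a, π s a = 1) :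
    ∀ n s, ∑ s', Pn p π n s s' = 1 := by
  intro n
  induction n with
  | zero => intro s; simp [Pn]
  | succ n ih =>
    intro s
    simp only [Pn]
    rw [Finset.sum_comm]
    have : ∀ a ∈ Finset.univ (α := A),
        (∑ s' : S, π s a * ∑ s'', p s a s'' * Pn p π n s'' s') = π s a := by
      intro a _
      rw [← Finset.mul_sum, Finset.sum_comm]
      have : (∑ s'' : S, ∑ s' : S, p s a s'' * Pn p π n s'' s') = 1 := by
        have : ∀ s'' ∈ Finset.univ (α := S),
            (∑ s' : S, p s a s'' * Pn p π n s'' s') = p s a s'' := by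
          intro s'' _
          rw [← Finset.mul_sum, ih s'', mul_one]
        rw [Finset.sum_congr rfl this, hp1]
      rw [this, mul_one]
    rw [Finset.sum_congr rfl this, hπ1]

lemma Pn_le_one (hp0 : ∀ s a s', 0 ≤ p s a s') (hπ0 : ∀ s a, 0 ≤ π s a)
    (hp1 : ∀ s a, ∑ s', p s a s' = 1) (hπ1 : ∀ s, ∑ a, π s a = 1)
    (n : ℕ) (s s' : S) : Pn p π n s s' ≤ 1 := by
  have := Finset.single_le_sum (f := fun s' => Pn p π n s s')
    (fun i _ => Pn_nonneg p π hp0 hπ0 n s i) (Finset.mem_univ s')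
  rwa [Pn_sum_one p π hp1 hπ1 n s] at this

lemma p_le_one (hp0 : ∀ s a s', 0 ≤ p s a s') (hp1 : ∀ s a, ∑ s', p s a s' = 1)
    (s : S) (a : A) (s' : S) : p s a s' ≤ 1 := by
  have := Finset.single_le_sum (f := fun s' => p s a s')
    (fun i _ => hp0 s a i) (Finset.mem_univ s')
  rwa [hp1] at this

lemma pi_le_one (hπ0 : ∀ s a, 0 ≤ π s a) (hπ1 : ∀ s, ∑ a, π s a = 1)
    (s : S) (a : A) : π s a ≤ 1 := by
  have := Finset.single_le_sum (f := fun a => π s a)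
    (fun i _ => hπ0 s i) (Finset.mem_univ a)
  rwa [hπ1] at this

lemma Pa_nonneg (hp0 : ∀ s a s', 0 ≤ p s a s') (hπ0 : ∀ s a, 0 ≤ π s a)
    (n : ℕ) (s : S) (a : A) (s' : S) : 0 ≤ Pa p π n s a s' := by
  cases n with
  | zero => simp [Pa]
  | succ n =>
    simp only [Pa]
    exact Finset.sum_nonneg fun s'' _ =>
      mul_nonneg (hp0 s a s'') (Pn_nonneg p π hp0 hπ0 n s'' s')

lemma Pa_le_one (hp0 : ∀ s a s', 0 ≤ p s a s') (hπ0 : ∀ s a, 0 ≤ π s a)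
    (hp1 : ∀ s a, ∑ s', p s a s' = 1) (hπ1 : ∀ s, ∑ a, π s a = 1)
    (n : ℕ) (s : S) (a : A) (s' : S) : Pa p π n s a s' ≤ 1 := by
  cases n with
  | zero => simp [Pa]
  | succ n =>
    simp only [Pa]
    calc (∑ s'', p s a s'' * Pn p π n s'' s') ≤ ∑ s'', p s a s'' * 1 := by
          apply Finset.sum_le_sum
          intro s'' _
          exact mul_le_mul_of_nonneg_left (Pn_le_one p π hp0 hπ0 hp1 hπ1 n s'' s')
            (hp0 s a s'')
      _ = 1 := by simp [hp1]

lemma Ja_nonneg (hp0 : ∀ s a s', 0 ≤ p s a s') (hπ0 : ∀ s a, 0 ≤ π s a)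
    (n : ℕ) (s : S) (a : A) (u : S) (b : A) (u' : S) : 0 ≤ Ja p π n s a u b u' := by
  unfold Ja
  split
  · apply mul_nonneg (mul_nonneg ?_ ?_) (hp0 s a u') <;> (split <;> norm_num)
  · exact mul_nonneg (mul_nonneg (Pa_nonneg p π hp0 hπ0 n s a u) (hπ0 u b)) (hp0 u b u')

lemma Ja_le_one (hp0 : ∀ s a s', 0 ≤ p s a s') (hπ0 : ∀ s a, 0 ≤ π s a)
    (hp1 : ∀ s a, ∑ s', p s a s' = 1) (hπ1 : ∀ s, ∑ a, π s a = 1)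
    (n : ℕ) (s : S) (a : A) (u : S) (b : A) (u' : S) : Ja p π n s a u b u' ≤ 1 := by
  unfold Ja
  have hp := p_le_one p hp0 hp1
  have hπ := pi_le_one π hπ0 hπ1
  split
  · have h1 : (if u = s then (1:ℝ) else 0) ≤ 1 := by split <;> norm_num
    have h2 : (0:ℝ) ≤ (if b = a then (1:ℝ) else 0) := by split <;> norm_num
    have h3 : (if b = a then (1:ℝ) else 0) ≤ 1 := by split <;> norm_num
    exact mul_le_one₀ (mul_le_one₀ h1 h2 h3) (hp0 s a u') (hp s a u')
  · exact mul_le_one₀ (mul_le_one₀ (Pa_le_one p π hp0 hπ0 hp1 hπ1 n s a u)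
      (hπ0 u b) (hπ u b)) (hp0 u b u') (hp u b u')

lemma Jpi_nonneg (hp0 : ∀ s a s', 0 ≤ p s a s') (hπ0 : ∀ s a, 0 ≤ π s a)
    (n : ℕ) (s u : S) (b : A) (u' : S) : 0 ≤ Jpi p π n s u b u' := by
  unfold Jpi
  split
  · apply mul_nonneg (mul_nonneg ?_ (hπ0 s b)) (hp0 s b u')
    split <;> norm_num
  · exact mul_nonneg (mul_nonneg (Pn_nonneg p π hp0 hπ0 n s u) (hπ0 u b)) (hp0 u b u')

lemma key_pointwise (hp0 : ∀ s a s', 0 ≤ p s a s') (hπ0 : ∀ s a, 0 ≤ π s a)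
    (s : S) (a : A) (hpa : 0 < π s a) (k : ℕ) (u : S) (b : A) (u' : S) :
    Jpi p π k s u b u' * (hhat p π k a s u b u' / π s a) = Ja p π k s a u b u' := by
  by_cases hJ : 0 < Jpi p π k s u b u'
  · rw [hhat, if_pos hJ]
    field_simp
  · have hJ0 : Jpi p π k s u b u' = 0 :=
      le_antisymm (not_lt.mp hJ) (Jpi_nonneg p π hp0 hπ0 k s u b u')
    rw [hJ0, zero_mul]
    -- show Ja = 0
    symm
    cases k with
    | zero =>
      rw [Jpi, if_pos rfl] at hJ0
      rw [Ja, if_pos rfl]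
      by_cases hu : u = s
      · by_cases hb : b = a
        · rw [if_pos hu, one_mul] at hJ0
          rw [if_pos hu, if_pos hb, one_mul, one_mul]
          subst hb
          rcases mul_eq_zero.mp hJ0 with h | h
          · exact absurd h (ne_of_gt hpa)
          · exact h
        · rw [if_neg hb, mul_zero, zero_mul]
      · rw [if_neg hu, zero_mul, zero_mul]
    | succ n =>
      unfold Jpi at hJ0
      unfold Ja
      simp only [Nat.succ_ne_zero, if_false] at hJ0 ⊢
      rcases mul_eq_zero.mp hJ0 with h | h
      · rcases mul_eq_zero.mp h with h | h
        · -- Pn (n+1) s u = 0; deduce Pa (n+1) s a u = 0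
          have hsum : (∑ a', π s a' * Pa p π (n+1) s a' u) = 0 := by
            rw [← h]
            simp only [Pn, Pa]
          have hterm : π s a * Pa p π (n+1) s a u = 0 := by
            have := (Finset.sum_eq_zero_iff_of_nonneg
              (fun a' _ => mul_nonneg (hπ0 s a')
                (Pa_nonneg p π hp0 hπ0 (n+1) s a' u))).mp hsum a (Finset.mem_univ a)
            exact this
          have : Pa p π (n+1) s a u = 0 := by
            rcases mul_eq_zero.mp hterm with h' | h'
            · exact absurd h' (ne_of_gt hpa)
            · exact h'
          rw [this, zero_mul, zero_mul]
        · rw [h, mul_zero, zero_mul]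
      · rw [h, mul_zero]

end aux

/-- hindsight representation of the Q-function for transition rewards.
The series defining `Q(s,a)` converges absolutely, and when `π(s,a) > 0` it equals the
series credited through the transition-conditioned hindsight probabilities, which also
converges absolutely. -/
theorem hindsight_Q_representation_transition_rewards
    {S A : Type*} [Fintype S] [Fintype A] [Nonempty S] [Nonempty A]
    (p : S → A → S → ℝ) (π : S → A → ℝ)
    (hp0 : ∀ s a s', 0 ≤ p s a s') (hp1 : ∀ s a, ∑ s', p s a s' = 1)
    (hπ0 : ∀ s a, 0 ≤ π s a) (hπ1 : ∀ s, ∑ a, π s a = 1)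
    (γ : ℝ) (hγ0 : 0 ≤ γ) (hγ1 : γ < 1) (r : S → A → S → ℝ) (s : S) (a : A) :
    Summable (fun k : ℕ =>
      |γ ^ k * ∑ u, ∑ b, ∑ u', Ja p π k s a u b u' * r u b u'|) ∧
    (0 < π s a →
      Summable (fun k : ℕ =>
        |γ ^ k * ∑ u, ∑ b, ∑ u',
            Jpi p π k s u b u' * (hhat p π k a s u b u' / π s a) * r u b u'|) ∧
      (∑' k : ℕ, γ ^ k * ∑ u, ∑ b, ∑ u', Ja p π k s a u b u' * r u b u') =
        ∑' k : ℕ, γ ^ k * ∑ u, ∑ b, ∑ u',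
          Jpi p π k s u b u' * (hhat p π k a s u b u' / π s a) * r u b u') := by
  set C : ℝ := ∑ u : S, ∑ b : A, ∑ u' : S, |r u b u'| with hC
  have habs : ∀ k : ℕ, |∑ u, ∑ b, ∑ u', Ja p π k s a u b u' * r u b u'| ≤ C := by
    intro k
    calc |∑ u, ∑ b, ∑ u', Ja p π k s a u b u' * r u b u'|
        ≤ ∑ u, ∑ b, ∑ u', |Ja p π k s a u b u' * r u b u'| := by
          refine (Finset.abs_sum_le_sum_abs _ _).trans (Finset.sum_le_sum fun u _ => ?_)
          refine (Finset.abs_sum_le_sum_abs _ _).trans (Finset.sum_le_sum fun b _ => ?_)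
          exact Finset.abs_sum_le_sum_abs _ _
      _ ≤ C := by
          refine Finset.sum_le_sum fun u _ => Finset.sum_le_sum fun b _ =>
            Finset.sum_le_sum fun u' _ => ?_
          rw [abs_mul, abs_of_nonneg (Ja_nonneg p π hp0 hπ0 k s a u b u')]
          calc Ja p π k s a u b u' * |r u b u'| ≤ 1 * |r u b u'| :=
                mul_le_mul_of_nonneg_right
                  (Ja_le_one p π hp0 hπ0 hp1 hπ1 k s a u b u') (abs_nonneg _)
            _ = |r u b u'| := one_mul _
  have hbound : ∀ k : ℕ,
      |γ ^ k * ∑ u, ∑ b, ∑ u', Ja p π k s a u b u' * r u b u'| ≤ γ ^ k * C := by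
    intro k
    rw [abs_mul, abs_of_nonneg (pow_nonneg hγ0 k)]
    exact mul_le_mul_of_nonneg_left (habs k) (pow_nonneg hγ0 k)
  have hgeo : Summable (fun k : ℕ => γ ^ k * C) :=
    (summable_geometric_of_lt_one hγ0 hγ1).mul_right C
  have h1 : Summable (fun k : ℕ =>
      |γ ^ k * ∑ u, ∑ b, ∑ u', Ja p π k s a u b u' * r u b u'|) :=
    Summable.of_nonneg_of_le (fun k => abs_nonneg _) hbound hgeo
  refine ⟨h1, fun hpa => ?_⟩
  have hEq : ∀ k : ℕ,
      (∑ u, ∑ b, ∑ u', Jpi p π k s u b u' * (hhat p π k a s u b u' / π s a) * r u b u')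
      = ∑ u, ∑ b, ∑ u', Ja p π k s a u b u' * r u b u' := by
    intro k
    refine Finset.sum_congr rfl fun u _ => Finset.sum_congr rfl fun b _ =>
      Finset.sum_congr rfl fun u' _ => ?_
    rw [key_pointwise p π hp0 hπ0 s a hpa k u b u']
  constructor
  · refine h1.congr fun k => ?_
    rw [hEq k]
  · exact (tsum_congr fun k => by rw [hEq k]).symm

end
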